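/- Let N ≥ 1 and let V be a real symmetric 2N×2N matrix. If the complex Hermitian matrix V + iΩ (the entrywise complexification of V plus i times the complexification of Ω) is positive semidefinite, then V is positive definite. -/

import Mathlib

open Matrix
open scoped ComplexOrder

/-- The standard 2N×2N symplectic form ⊕_{j=1}^{N} [[0,1],[−1,0]]. -/
def symplecticForm (N : ℕ) : Matrix (Fin (2 * N)) (Fin (2 * N)) ℝ :=
  Matrix.of fun i j =>
    if i.val % 2 = 0 ∧ j.val = i.val + 1 then (1 : ℝ)
    else if j.val % 2 = 0 ∧ i.val = j.val + 1 then (-1 : ℝ)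
    else 0

lemma symplecticForm_transpose (N : ℕ) :
    (symplecticForm N)ᵀ = -(symplecticForm N) := by
  ext i j
  simp only [transpose_apply, Matrix.neg_apply, symplecticForm, of_apply]
  split_ifs <;> first | omega | norm_num

lemma symplecticForm_mulVec_even {N : ℕ} (x : Fin (2 * N) → ℝ) (i : Fin (2 * N))
    (hi : i.val % 2 = 0) (h1 : i.val + 1 < 2 * N) :
    (symplecticForm N *ᵥ x) i = x ⟨i.val + 1, h1⟩ := by
  rw [mulVec, dotProduct]
  rw [Finset.sum_eq_single (⟨i.val + 1, h1⟩ : Fin (2 * N))]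
  · simp [symplecticForm, hi]
  · intro b _ hb
    simp only [symplecticForm, of_apply]
    have hbv : ¬ ((b : ℕ) = i.val + 1) := fun hc => hb (Fin.ext hc)
    rw [if_neg (by tauto), if_neg (by omega)]
    ring
  · simp

lemma symplecticForm_mulVec_odd {N : ℕ} (x : Fin (2 * N) → ℝ) (i : Fin (2 * N))
    (hi : i.val % 2 = 1) :
    (symplecticForm N *ᵥ x) i = -x ⟨i.val - 1, by omega⟩ := by
  rw [mulVec, dotProduct]
  have hi1 : i.val - 1 < 2 * N := by omega
  rw [Finset.sum_eq_single (⟨i.val - 1, hi1⟩ : Fin (2 * N))]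
  · simp only [symplecticForm, of_apply]
    rw [if_neg (by omega), if_pos (by constructor <;> omega)]
    ring
  · intro b _ hb
    simp only [symplecticForm, of_apply]
    have hcond : ¬ ((b : ℕ) % 2 = 0 ∧ i.val = (b : ℕ) + 1) := by
      rintro ⟨hb1, hb2⟩
      exact hb (Fin.ext (show (b : ℕ) = i.val - 1 by omega))
    rw [if_neg (by omega), if_neg hcond]
    ring
  · simp

lemma symplecticForm_mulVec_eq_zero {N : ℕ} (x : Fin (2 * N) → ℝ)
    (hx : symplecticForm N *ᵥ x = 0) : x = 0 := by
  funext j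
  rcases Nat.even_or_odd j.val with hj | hj
  · have hj0 : j.val % 2 = 0 := Nat.even_iff.mp hj
    have h1 : j.val + 1 < 2 * N := by omega
    have h2 := symplecticForm_mulVec_odd x ⟨j.val + 1, h1⟩ (by simp; omega)
    rw [hx] at h2
    simp only [Pi.zero_apply] at h2
    have hjj : (⟨j.val + 1 - 1, by omega⟩ : Fin (2 * N)) = j := Fin.ext (by simp)
    rw [hjj] at h2
    simpa using h2.symm
  · have hj1 : j.val % 2 = 1 := Nat.odd_iff.mp hj
    have h1 : j.val - 1 < 2 * N := by omega
    have hjm : (j.val - 1) % 2 = 0 := by omega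
    have h2' : (j.val - 1) + 1 < 2 * N := by omega
    have h2 := symplecticForm_mulVec_even x ⟨j.val - 1, h1⟩ hjm h2'
    rw [hx] at h2
    simp only [Pi.zero_apply] at h2
    have hjj : (⟨(j.val : ℕ) - 1 + 1, h2'⟩ : Fin (2 * N)) = j := Fin.ext (by simp; omega)
    rw [hjj] at h2
    exact h2.symm

lemma dotProduct_symplecticForm_self {N : ℕ} (x : Fin (2 * N) → ℝ) :
    x ⬝ᵥ symplecticForm N *ᵥ x = 0 := by
  have h1 : x ⬝ᵥ symplecticForm N *ᵥ x = -(x ⬝ᵥ symplecticForm N *ᵥ x) := by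
    conv_lhs => rw [dotProduct_mulVec, ← mulVec_transpose, symplecticForm_transpose,
      neg_mulVec, neg_dotProduct, dotProduct_comm]
  linarith

lemma mulVec_map_ofReal {n : ℕ} (M : Matrix (Fin n) (Fin n) ℝ) (v : Fin n → ℝ) (i : Fin n) :
    (M.map Complex.ofReal *ᵥ (Complex.ofReal ∘ v)) i = (((M *ᵥ v) i : ℝ) : ℂ) := by
  simp only [mulVec, dotProduct, Matrix.map_apply, Function.comp_apply]
  push_cast
  rfl

theorem posSemidef_add_i_omega_implies_posDef {N : ℕ} (hN : 1 ≤ N)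
    (V : Matrix (Fin (2 * N)) (Fin (2 * N)) ℝ) (hVs : V.IsSymm)
    (h : (V.map (Complex.ofReal) +
            Complex.I • (symplecticForm N).map (Complex.ofReal)).PosSemidef) :
    V.PosDef := by
  set M := V.map (Complex.ofReal) +
      Complex.I • (symplecticForm N).map (Complex.ofReal) with hM
  have key : ∀ x : Fin (2 * N) → ℝ,
      star ((Complex.ofReal) ∘ x) ⬝ᵥ M *ᵥ ((Complex.ofReal) ∘ x)
        = ((x ⬝ᵥ V *ᵥ x : ℝ) : ℂ) := by
    intro x
    have hstar : star ((Complex.ofReal) ∘ x) = (Complex.ofReal) ∘ x := by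
      funext i; simp [Complex.conj_ofReal]
    rw [hstar, hM, add_mulVec, smul_mulVec, dotProduct_add, dotProduct_smul]
    have hV : (Complex.ofReal ∘ x) ⬝ᵥ (V.map Complex.ofReal) *ᵥ (Complex.ofReal ∘ x)
        = ((x ⬝ᵥ V *ᵥ x : ℝ) : ℂ) := by
      rw [dotProduct, dotProduct]
      push_cast
      exact Finset.sum_congr rfl fun i _ => by rw [mulVec_map_ofReal]; rfl
    have hO : (Complex.ofReal ∘ x) ⬝ᵥ ((symplecticForm N).map Complex.ofReal) *ᵥ (Complex.ofReal ∘ x)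
        = ((x ⬝ᵥ symplecticForm N *ᵥ x : ℝ) : ℂ) := by
      rw [dotProduct, dotProduct]
      push_cast
      exact Finset.sum_congr rfl fun i _ => by rw [mulVec_map_ofReal]; rfl
    rw [hV, hO, dotProduct_symplecticForm_self x]
    simp
  rw [posDef_iff_dotProduct_mulVec]
  constructor
  · exact hVs
  · intro x hx
    rw [star_trivial]
    have h0 : (0 : ℂ) ≤ ((x ⬝ᵥ V *ᵥ x : ℝ) : ℂ) := by
      rw [← key x]; exact h.dotProduct_mulVec_nonneg _
    have hnonneg : (0 : ℝ) ≤ x ⬝ᵥ V *ᵥ x := by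
      rwa [Complex.zero_le_real] at h0
    rcases lt_or_eq_of_le hnonneg with hlt | heq
    · exact hlt
    · exfalso
      have hz : star ((Complex.ofReal) ∘ x) ⬝ᵥ M *ᵥ ((Complex.ofReal) ∘ x) = 0 := by
        rw [key x, ← heq]; simp
      have hker : M *ᵥ ((Complex.ofReal) ∘ x) = 0 :=
        (h.dotProduct_mulVec_zero_iff _).mp hz
      have hentry : ∀ i, (((V *ᵥ x) i : ℝ) : ℂ)
          + Complex.I * (((symplecticForm N *ᵥ x) i : ℝ) : ℂ) = 0 := by
        intro i
        have hc := congrFun hker i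
        rw [hM, add_mulVec, smul_mulVec] at hc
        simp only [Pi.add_apply, Pi.smul_apply, smul_eq_mul, Pi.zero_apply] at hc
        rw [mulVec_map_ofReal, mulVec_map_ofReal] at hc
        exact hc
      have hOx : symplecticForm N *ᵥ x = 0 := by
        funext i
        have him := congrArg Complex.im (hentry i)
        simpa using him
      exact hx (symplecticForm_mulVec_eq_zero x hOx)
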